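/- Let V : T → R be continuous, 0 < α ≤ 2, and c_j > 0. Define Φ_α on the set C of coefficient vectors (a_0,...,a_n,b_1,...,b_n) with f(x) := a_0 + ∑_{k=1}^n (a_k cos(2πkx) + b_k sin(2πkx)) − V(x) > 0 for all x, by Φ_α(a,b) = ∫_T φ_α(f(y)) dy, where φ_α(x) = (c_j α/(α−1)) x^{(α−1)/α} for α ≠ 1 and φ_α(x) = c_j ln x for α = 1. Then for any (a,b) ∈ C and any nonzero (ξ_0,...,ξ_n,η_1,...,η_n) ∈ R^{2n+1}, the quadratic form of the Hessian of Φ_α at (a,b) applied to (ξ,η) equals −(c_j/α) ∫_T (ξ_0 + ∑_{k=1}^n ξ_k cos(2πky) + η_k sin(2πky))^2 / f(y)^{1+1/α} dy < 0; in particular Φ_α is strictly concave on C. -/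

import Mathlib

open Real

section helpers
open MeasureTheory intervalIntegral Set


private lemma int_cos (m : ℤ) :
    ∫ y in (0:ℝ)..1, Real.cos (2*π*m*y) = if m = 0 then 1 else 0 := by
  rcases eq_or_ne m 0 with h | h
  · simp [h]
  · have hc : (2*π*(m:ℝ)) ≠ 0 :=
      mul_ne_zero (mul_ne_zero two_ne_zero pi_ne_zero) (Int.cast_ne_zero.mpr h)
    rw [if_neg h]
    have := intervalIntegral.integral_comp_mul_left Real.cos hc (a := (0:ℝ)) (b := 1)
    rw [this]
    have h2 : Real.sin (2*π*(m:ℝ)) = 0 := by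
      have : (2*π*(m:ℝ)) = ((2*m : ℤ) : ℝ) * π := by push_cast; ring
      rw [this, Real.sin_int_mul_pi]
    rw [integral_cos]
    simp [h2]

private lemma int_sin (m : ℤ) :
    ∫ y in (0:ℝ)..1, Real.sin (2*π*m*y) = 0 := by
  rcases eq_or_ne m 0 with h | h
  · simp [h]
  · have hc : (2*π*(m:ℝ)) ≠ 0 :=
      mul_ne_zero (mul_ne_zero two_ne_zero pi_ne_zero) (Int.cast_ne_zero.mpr h)
    have := intervalIntegral.integral_comp_mul_left Real.sin hc (a := (0:ℝ)) (b := 1)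
    rw [this]
    have h2 : Real.cos (2*π*(m:ℝ)) = 1 := by
      have : (2*π*(m:ℝ)) = (m : ℝ) * (2 * π) := by push_cast; ring
      rw [this, Real.cos_int_mul_two_pi]
    rw [integral_sin]
    simp [h2]

private lemma int_cos_cos (k m : ℕ) :
    ∫ y in (0:ℝ)..1, Real.cos (2*π*k*y) * Real.cos (2*π*m*y)
      = if k = m then (if k = 0 then 1 else 1/2) else 0 := by
  have hint : ∀ y : ℝ, Real.cos (2*π*(k:ℝ)*y) * Real.cos (2*π*(m:ℝ)*y)
      = (Real.cos (2*π*(((k:ℤ)-m : ℤ):ℝ)*y) + Real.cos (2*π*(((k:ℤ)+m : ℤ):ℝ)*y)) / 2 := by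
    intro y
    have h := Real.two_mul_cos_mul_cos (2*π*(k:ℝ)*y) (2*π*(m:ℝ)*y)
    have e1 : 2*π*(k:ℝ)*y - 2*π*(m:ℝ)*y = 2*π*(((k:ℤ)-m : ℤ):ℝ)*y := by push_cast; ring
    have e2 : 2*π*(k:ℝ)*y + 2*π*(m:ℝ)*y = 2*π*(((k:ℤ)+m : ℤ):ℝ)*y := by push_cast; ring
    rw [e1, e2] at h
    linarith
  rw [intervalIntegral.integral_congr (g := fun y =>
    (Real.cos (2*π*(((k:ℤ)-m : ℤ):ℝ)*y) + Real.cos (2*π*(((k:ℤ)+m : ℤ):ℝ)*y)) / 2)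
    (fun y _ => hint y)]
  have i1 : IntervalIntegrable (fun y => Real.cos (2*π*(((k:ℤ)-m : ℤ):ℝ)*y)) volume 0 1 :=
    (Real.continuous_cos.comp (continuous_const.mul continuous_id)).intervalIntegrable _ _
  have i2 : IntervalIntegrable (fun y => Real.cos (2*π*(((k:ℤ)+m : ℤ):ℝ)*y)) volume 0 1 :=
    (Real.continuous_cos.comp (continuous_const.mul continuous_id)).intervalIntegrable _ _
  rw [intervalIntegral.integral_div, intervalIntegral.integral_add i1 i2, int_cos, int_cos]
  rcases eq_or_ne k m with h | h
  · subst h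
    rcases eq_or_ne k 0 with h0 | h0
    · simp [h0]
    · have : ¬ ((k:ℤ) + k = 0) := by omega
      simp [h0, this]
  · have h1 : ¬ ((k:ℤ) - m = 0) := by omega
    rcases eq_or_ne ((k:ℤ) + m) 0 with h2 | h2
    · have hk0 : k = 0 := by omega
      have hm0 : m = 0 := by omega
      exact absurd (hk0.trans hm0.symm) h
    · simp [h1, h2, h]

private lemma int_sin_cos (k m : ℕ) :
    ∫ y in (0:ℝ)..1, Real.sin (2*π*k*y) * Real.cos (2*π*m*y) = 0 := by
  have hint : ∀ y : ℝ, Real.sin (2*π*(k:ℝ)*y) * Real.cos (2*π*(m:ℝ)*y)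
      = (Real.sin (2*π*(((k:ℤ)-m : ℤ):ℝ)*y) + Real.sin (2*π*(((k:ℤ)+m : ℤ):ℝ)*y)) / 2 := by
    intro y
    have h := Real.two_mul_sin_mul_cos (2*π*(k:ℝ)*y) (2*π*(m:ℝ)*y)
    have e1 : 2*π*(k:ℝ)*y - 2*π*(m:ℝ)*y = 2*π*(((k:ℤ)-m : ℤ):ℝ)*y := by push_cast; ring
    have e2 : 2*π*(k:ℝ)*y + 2*π*(m:ℝ)*y = 2*π*(((k:ℤ)+m : ℤ):ℝ)*y := by push_cast; ring
    rw [e1, e2] at h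
    linarith
  rw [intervalIntegral.integral_congr (g := fun y =>
    (Real.sin (2*π*(((k:ℤ)-m : ℤ):ℝ)*y) + Real.sin (2*π*(((k:ℤ)+m : ℤ):ℝ)*y)) / 2)
    (fun y _ => hint y)]
  have i1 : IntervalIntegrable (fun y => Real.sin (2*π*(((k:ℤ)-m : ℤ):ℝ)*y)) volume 0 1 :=
    (Real.continuous_sin.comp (continuous_const.mul continuous_id)).intervalIntegrable _ _
  have i2 : IntervalIntegrable (fun y => Real.sin (2*π*(((k:ℤ)+m : ℤ):ℝ)*y)) volume 0 1 :=
    (Real.continuous_sin.comp (continuous_const.mul continuous_id)).intervalIntegrable _ _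
  rw [intervalIntegral.integral_div, intervalIntegral.integral_add i1 i2, int_sin, int_sin]
  norm_num

private lemma int_sin_sin (k m : ℕ) :
    ∫ y in (0:ℝ)..1, Real.sin (2*π*k*y) * Real.sin (2*π*m*y)
      = if k = m then (if k = 0 then 0 else 1/2) else 0 := by
  have hint : ∀ y : ℝ, Real.sin (2*π*(k:ℝ)*y) * Real.sin (2*π*(m:ℝ)*y)
      = (Real.cos (2*π*(((k:ℤ)-m : ℤ):ℝ)*y) - Real.cos (2*π*(((k:ℤ)+m : ℤ):ℝ)*y)) / 2 := by
    intro y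
    have h := Real.two_mul_sin_mul_sin (2*π*(k:ℝ)*y) (2*π*(m:ℝ)*y)
    have e1 : 2*π*(k:ℝ)*y - 2*π*(m:ℝ)*y = 2*π*(((k:ℤ)-m : ℤ):ℝ)*y := by push_cast; ring
    have e2 : 2*π*(k:ℝ)*y + 2*π*(m:ℝ)*y = 2*π*(((k:ℤ)+m : ℤ):ℝ)*y := by push_cast; ring
    rw [e1, e2] at h
    linarith
  rw [intervalIntegral.integral_congr (g := fun y =>
    (Real.cos (2*π*(((k:ℤ)-m : ℤ):ℝ)*y) - Real.cos (2*π*(((k:ℤ)+m : ℤ):ℝ)*y)) / 2)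
    (fun y _ => hint y)]
  have i1 : IntervalIntegrable (fun y => Real.cos (2*π*(((k:ℤ)-m : ℤ):ℝ)*y)) volume 0 1 :=
    (Real.continuous_cos.comp (continuous_const.mul continuous_id)).intervalIntegrable _ _
  have i2 : IntervalIntegrable (fun y => Real.cos (2*π*(((k:ℤ)+m : ℤ):ℝ)*y)) volume 0 1 :=
    (Real.continuous_cos.comp (continuous_const.mul continuous_id)).intervalIntegrable _ _
  rw [intervalIntegral.integral_div, intervalIntegral.integral_sub i1 i2, int_cos, int_cos]
  rcases eq_or_ne k m with h | h
  · subst h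
    rcases eq_or_ne k 0 with h0 | h0
    · simp [h0]
    · have : ¬ ((k:ℤ) + k = 0) := by omega
      simp [h0, this]
  · have h1 : ¬ ((k:ℤ) - m = 0) := by omega
    rcases eq_or_ne ((k:ℤ) + m) 0 with h2 | h2
    · have hk0 : k = 0 := by omega
      have hm0 : m = 0 := by omega
      exact absurd (hk0.trans hm0.symm) h
    · simp [h1, h2, h]



private lemma coeffs_zero {n : ℕ} (v : (Fin (n+1) → ℝ) × (Fin n → ℝ))
    (h : ∀ y ∈ Icc (0:ℝ) 1,
      (∑ k : Fin (n+1), v.1 k * Real.cos (2*π*k.1*y)) +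
      (∑ k : Fin n, v.2 k * Real.sin (2*π*(k.1+1)*y)) = 0) : v = 0 := by
  have hcont1 : ∀ (w : ℝ → ℝ) (hw : Continuous w) (k : ℕ) (c : ℝ),
      IntervalIntegrable (fun y => c * w (2*π*k*y)) volume 0 1 := fun w hw k c =>
    (continuous_const.mul (hw.comp (continuous_const.mul continuous_id))).intervalIntegrable _ _
  -- key computation of ∫ g y * w (2π m y)
  have main : ∀ (w : ℝ → ℝ), Continuous w → ∀ m : ℕ,
      (∑ k : Fin (n+1), v.1 k * ∫ y in (0:ℝ)..1, Real.cos (2*π*k.1*y) * w (2*π*m*y)) +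
      (∑ k : Fin n, v.2 k * ∫ y in (0:ℝ)..1, Real.sin (2*π*(k.1+1)*y) * w (2*π*m*y)) = 0 := by
    intro w hw m
    have hzero : (∫ y in (0:ℝ)..1,
        ((∑ k : Fin (n+1), v.1 k * Real.cos (2*π*k.1*y)) +
         (∑ k : Fin n, v.2 k * Real.sin (2*π*(k.1+1)*y))) * w (2*π*m*y)) = 0 := by
      rw [intervalIntegral.integral_congr (g := fun _ => (0:ℝ))]
      · simp
      · intro y hy
        rw [Set.uIcc_of_le (by norm_num : (0:ℝ) ≤ 1)] at hy
        simp [h y hy]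
    have expand : ∀ y : ℝ,
        ((∑ k : Fin (n+1), v.1 k * Real.cos (2*π*k.1*y)) +
         (∑ k : Fin n, v.2 k * Real.sin (2*π*(k.1+1)*y))) * w (2*π*m*y)
        = (∑ k : Fin (n+1), v.1 k * (Real.cos (2*π*k.1*y) * w (2*π*m*y))) +
          (∑ k : Fin n, v.2 k * (Real.sin (2*π*(k.1+1)*y) * w (2*π*m*y))) := by
      intro y
      rw [add_mul, Finset.sum_mul, Finset.sum_mul]
      congr 1 <;> exact Finset.sum_congr rfl fun k _ => by ring
    rw [intervalIntegral.integral_congr (g := fun y =>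
        (∑ k : Fin (n+1), v.1 k * (Real.cos (2*π*k.1*y) * w (2*π*m*y))) +
        (∑ k : Fin n, v.2 k * (Real.sin (2*π*(k.1+1)*y) * w (2*π*m*y))))
        (fun y _ => expand y)] at hzero
    have ii1 : ∀ k : Fin (n+1), IntervalIntegrable
        (fun y => v.1 k * (Real.cos (2*π*k.1*y) * w (2*π*m*y))) volume 0 1 := fun k =>
      (continuous_const.mul ((Real.continuous_cos.comp (continuous_const.mul continuous_id)).mul
        (hw.comp (continuous_const.mul continuous_id)))).intervalIntegrable _ _
    have ii2 : ∀ k : Fin n, IntervalIntegrable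
        (fun y => v.2 k * (Real.sin (2*π*(k.1+1)*y) * w (2*π*m*y))) volume 0 1 := fun k =>
      (continuous_const.mul ((Real.continuous_sin.comp (by continuity)).mul
        (hw.comp (continuous_const.mul continuous_id)))).intervalIntegrable _ _
    have A : IntervalIntegrable (fun x : ℝ => ∑ k : Fin (n+1),
        v.1 k * (Real.cos (2*π*k.1*x) * w (2*π*m*x))) volume 0 1 := by
      apply Continuous.intervalIntegrable
      exact continuous_finset_sum _ fun k _ => continuous_const.mul
        ((Real.continuous_cos.comp (continuous_const.mul continuous_id)).mul
          (hw.comp (continuous_const.mul continuous_id)))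
    have B : IntervalIntegrable (fun x : ℝ => ∑ k : Fin n,
        v.2 k * (Real.sin (2*π*(k.1+1)*x) * w (2*π*m*x))) volume 0 1 := by
      apply Continuous.intervalIntegrable
      exact continuous_finset_sum _ fun k _ => continuous_const.mul
        ((Real.continuous_sin.comp (continuous_const.mul continuous_id)).mul
          (hw.comp (continuous_const.mul continuous_id)))
    simp only [← intervalIntegral.integral_const_mul]
    rw [← intervalIntegral.integral_finset_sum (fun k _ => ii1 k),
        ← intervalIntegral.integral_finset_sum (fun k _ => ii2 k),
        ← intervalIntegral.integral_add A B]
    exact hzero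
  rw [Prod.ext_iff]
  constructor
  all_goals simp only [Prod.fst_zero, Prod.snd_zero]
  all_goals funext m
  all_goals simp only [Pi.zero_apply]
  · -- cosine coefficients
    have := main Real.cos Real.continuous_cos m.1
    have e1 : ∀ k : Fin (n+1),
        v.1 k * ∫ y in (0:ℝ)..1, Real.cos (2*π*k.1*y) * Real.cos (2*π*m.1*y)
        = if k = m then v.1 k * (if (m.1:ℕ) = 0 then 1 else 1/2) else 0 := by
      intro k
      rw [int_cos_cos]
      rcases eq_or_ne k m with hk | hk
      · subst hk; simp
      · have : k.1 ≠ m.1 := fun hh => hk (Fin.val_injective hh)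
        simp [this, hk]
    have e2 : ∀ k : Fin n,
        v.2 k * ∫ y in (0:ℝ)..1, Real.sin (2*π*(k.1+1)*y) * Real.cos (2*π*m.1*y) = 0 := by
      intro k
      have : ((k.1:ℝ)+1) = ((k.1+1 : ℕ) : ℝ) := by push_cast; ring
      rw [show (2*π*((k.1:ℝ)+1)) = 2*π*((k.1+1 : ℕ):ℝ) by rw [this]]
      rw [int_sin_cos]; ring
    rw [Finset.sum_congr rfl (fun k _ => e1 k), Finset.sum_congr rfl (fun k _ => e2 k),
      Finset.sum_ite_eq' Finset.univ m (fun k => v.1 k * (if (m.1:ℕ) = 0 then 1 else 1/2))] at this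
    simp only [Finset.mem_univ, if_true, Finset.sum_const_zero, add_zero] at this
    rcases eq_or_ne (m.1 : ℕ) 0 with h0 | h0 <;> simp [h0] at this <;> simp [this]
  · -- sine coefficients
    have := main Real.sin Real.continuous_sin (m.1+1)
    have e1 : ∀ k : Fin (n+1),
        v.1 k * ∫ y in (0:ℝ)..1, Real.cos (2*π*k.1*y) * Real.sin (2*π*(m.1+1:ℕ)*y) = 0 := by
      intro k
      have comm : ∀ y:ℝ, Real.cos (2*π*k.1*y) * Real.sin (2*π*(m.1+1:ℕ)*y)
          = Real.sin (2*π*(m.1+1:ℕ)*y) * Real.cos (2*π*k.1*y) := fun y => by ring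
      rw [intervalIntegral.integral_congr (fun y _ => comm y), int_sin_cos]; ring
    have e2 : ∀ k : Fin n,
        v.2 k * ∫ y in (0:ℝ)..1, Real.sin (2*π*(k.1+1)*y) * Real.sin (2*π*(m.1+1:ℕ)*y)
        = if k = m then v.2 k * (1/2) else 0 := by
      intro k
      rw [show (2*π*((k.1:ℝ)+1)) = 2*π*((k.1+1 : ℕ):ℝ) by push_cast; ring]
      rw [int_sin_sin]
      rcases eq_or_ne k m with hk | hk
      · subst hk; simp
      · have : (k.1+1 : ℕ) ≠ (m.1+1 : ℕ) := fun hh => hk (Fin.val_injective (by omega))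
        simp [this, hk, show k.1 ≠ m.1 from fun hh => hk (Fin.ext hh)]
    rw [Finset.sum_congr rfl (fun k _ => e1 k), Finset.sum_congr rfl (fun k _ => e2 k),
      Finset.sum_ite_eq' Finset.univ m (fun k => v.2 k * (1/2))] at this
    simp only [Finset.mem_univ, if_true, Finset.sum_const_zero, zero_add] at this
    simp at this
    simp [this]



private lemma phi_deriv {α cj : ℝ} (hα0 : 0 < α) {φ : ℝ → ℝ}
    (hφ : ∀ x : ℝ, 0 < x →
      φ x = if α = 1 then cj * Real.log x else cj * α / (α - 1) * x ^ ((α - 1) / α))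
    {x : ℝ} (hx : 0 < x) : HasDerivAt φ (cj * x ^ (-1/α)) x := by
  have hev : (fun z => if α = 1 then cj * Real.log z
      else cj * α / (α - 1) * z ^ ((α - 1) / α)) =ᶠ[nhds x] φ := by
    filter_upwards [IsOpen.mem_nhds isOpen_Ioi hx] with z hz
    exact (hφ z hz).symm
  apply HasDerivAt.congr_of_eventuallyEq _ hev.symm
  rcases eq_or_ne α 1 with h1 | h1
  · subst h1
    simp only [if_pos rfl]
    have := (Real.hasDerivAt_log (ne_of_gt hx)).const_mul cj
    refine this.congr_deriv ?_
    rw [show (-1/(1:ℝ)) = -1 by norm_num, Real.rpow_neg_one]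
  · simp only [if_neg h1]
    have hd := (Real.hasDerivAt_rpow_const (p := (α-1)/α) (Or.inl (ne_of_gt hx))).const_mul
      (cj * α / (α - 1))
    have hαne : α ≠ 0 := ne_of_gt hα0
    have hα1 : α - 1 ≠ 0 := sub_ne_zero.mpr h1
    have he : (α-1)/α - 1 = -1/α := by field_simp; ring
    have hco : cj * α / (α - 1) * ((α-1)/α) = cj := by field_simp
    refine hd.congr_deriv ?_
    rw [he, ← mul_assoc, hco]

private lemma phi2_deriv {α cj x : ℝ} (hα0 : 0 < α) (hx : 0 < x) :
    HasDerivAt (fun z : ℝ => cj * z ^ (-1/α)) (-(cj/α) * x ^ (-(1+1/α))) x := by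
  have hd := (Real.hasDerivAt_rpow_const (p := -1/α) (Or.inl (ne_of_gt hx))).const_mul cj
  have hαne : α ≠ 0 := ne_of_gt hα0
  have he : -1/α - 1 = -(1+1/α) := by field_simp; ring
  refine hd.congr_deriv ?_
  rw [he]
  ring



private lemma DF {u g : ℝ → ℝ} (hu : Continuous u) (hg : Continuous g)
    {α cj : ℝ} (hα0 : 0 < α) (hcj : 0 < cj) {φ : ℝ → ℝ}
    (hφd : ∀ x : ℝ, 0 < x → HasDerivAt φ (cj * x ^ (-1/α)) x)
    {t₀ r ε : ℝ} (hr : 0 < r) (hε : 0 < ε)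
    (hpos : ∀ t ∈ Metric.ball t₀ r, ∀ y ∈ Icc (0:ℝ) 1, ε ≤ u y + t * g y)
    {B : ℝ} (hB : ∀ y ∈ Icc (0:ℝ) 1, |g y| ≤ B) :
    HasDerivAt (fun t => ∫ y in (0:ℝ)..1, φ (u y + t * g y))
      (∫ y in (0:ℝ)..1, cj * (u y + t₀ * g y) ^ (-1/α) * g y) t₀ := by
  have hB0 : 0 ≤ B := le_trans (abs_nonneg _) (hB 0 ⟨le_refl _, zero_le_one⟩)
  have hIoc : Set.uIoc (0:ℝ) 1 = Set.Ioc 0 1 := uIoc_of_le zero_le_one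
  have ht₀ : t₀ ∈ Metric.ball t₀ r := Metric.mem_ball_self hr
  have hφc : ∀ z : ℝ, 0 < z → ContinuousAt φ z := fun z hz => (hφd z hz).continuousAt
  have hexp : (-1/α) ≤ 0 := le_of_lt (div_neg_of_neg_of_pos (by norm_num) hα0)
  have hinnerC : ∀ t : ℝ, Continuous (fun y => u y + t * g y) :=
    fun t => hu.add (continuous_const.mul hg)
  have hφCOn : ContinuousOn φ (Ioi 0) := fun z hz => (hφc z hz).continuousWithinAt
  have hcontF : ∀ t ∈ Metric.ball t₀ r, ContinuousOn (fun y => φ (u y + t * g y)) (Icc 0 1) := by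
    intro t ht
    exact hφCOn.comp (hinnerC t).continuousOn
      (fun y hy => mem_Ioi.mpr (lt_of_lt_of_le hε (hpos t ht y hy)))
  have hcontF' : ∀ t ∈ Metric.ball t₀ r,
      ContinuousOn (fun y => cj * (u y + t * g y) ^ (-1/α) * g y) (Icc 0 1) := by
    intro t ht
    exact (continuousOn_const.mul (((hinnerC t).continuousOn).rpow_const
      (fun y hy => Or.inl (ne_of_gt (lt_of_lt_of_le hε (hpos t ht y hy)))))).mul hg.continuousOn
  refine (intervalIntegral.hasDerivAt_integral_of_dominated_loc_of_deriv_le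
    (F := fun t y => φ (u y + t * g y))
    (F' := fun t y => cj * (u y + t * g y) ^ (-1/α) * g y)
    (bound := fun _ => cj * ε ^ (-1/α) * B) (μ := volume) (a := (0:ℝ)) (b := 1) (Metric.ball_mem_nhds t₀ hr)
    ?_ ?_ ?_ ?_ ?_ ?_).2
  · filter_upwards [Metric.ball_mem_nhds t₀ hr] with t ht
    exact ((hcontF t ht).mono (by rw [hIoc]; exact Ioc_subset_Icc_self)).aestronglyMeasurable
      measurableSet_uIoc
  · exact ContinuousOn.intervalIntegrable (by rw [uIcc_of_le zero_le_one]; exact hcontF t₀ ht₀)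
  · exact ((hcontF' t₀ ht₀).mono (by rw [hIoc]; exact Ioc_subset_Icc_self)).aestronglyMeasurable
      measurableSet_uIoc
  · filter_upwards with y hy x hx
    have hyI : y ∈ Icc (0:ℝ) 1 := Ioc_subset_Icc_self (hIoc ▸ hy)
    have hz : ε ≤ u y + x * g y := hpos x hx y hyI
    have hz0 : (0:ℝ) < u y + x * g y := lt_of_lt_of_le hε hz
    rw [Real.norm_eq_abs, abs_mul, abs_mul, abs_of_pos hcj,
      abs_of_nonneg (Real.rpow_nonneg (le_of_lt hz0) _)]
    have h1 := Real.rpow_le_rpow_of_nonpos hε hz hexp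
    exact mul_le_mul (mul_le_mul_of_nonneg_left h1 hcj.le) (hB y hyI) (abs_nonneg _)
      (by positivity)
  · exact intervalIntegrable_const
  · filter_upwards with y hy x hx
    have hyI : y ∈ Icc (0:ℝ) 1 := Ioc_subset_Icc_self (hIoc ▸ hy)
    have hz0 : (0:ℝ) < u y + x * g y := lt_of_lt_of_le hε (hpos x hx y hyI)
    have hinner : HasDerivAt (fun s : ℝ => u y + s * g y) (g y) x :=
      (hasDerivAt_mul_const (g y)).const_add (u y)
    exact (hφd _ hz0).comp x hinner

private lemma DF1 {u g : ℝ → ℝ} (hu : Continuous u) (hg : Continuous g)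
    {α cj : ℝ} (hα0 : 0 < α) (hcj : 0 < cj)
    {t₀ r ε : ℝ} (hr : 0 < r) (hε : 0 < ε)
    (hpos : ∀ t ∈ Metric.ball t₀ r, ∀ y ∈ Icc (0:ℝ) 1, ε ≤ u y + t * g y)
    {B : ℝ} (hB : ∀ y ∈ Icc (0:ℝ) 1, |g y| ≤ B) :
    HasDerivAt (fun t => ∫ y in (0:ℝ)..1, cj * (u y + t * g y) ^ (-1/α) * g y)
      (∫ y in (0:ℝ)..1, -(cj/α) * (u y + t₀ * g y) ^ (-(1+1/α)) * g y ^ 2) t₀ := by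
  have hB0 : 0 ≤ B := le_trans (abs_nonneg _) (hB 0 ⟨le_refl _, zero_le_one⟩)
  have hIoc : Set.uIoc (0:ℝ) 1 = Set.Ioc 0 1 := uIoc_of_le zero_le_one
  have ht₀ : t₀ ∈ Metric.ball t₀ r := Metric.mem_ball_self hr
  have hexp : (-(1+1/α)) ≤ 0 := by
    have : 0 < 1 + 1/α := by positivity
    linarith
  have hinnerC : ∀ t : ℝ, Continuous (fun y => u y + t * g y) :=
    fun t => hu.add (continuous_const.mul hg)
  have hcontF : ∀ t ∈ Metric.ball t₀ r,
      ContinuousOn (fun y => cj * (u y + t * g y) ^ (-1/α) * g y) (Icc 0 1) := by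
    intro t ht
    exact (continuousOn_const.mul (((hinnerC t).continuousOn).rpow_const
      (fun y hy => Or.inl (ne_of_gt (lt_of_lt_of_le hε (hpos t ht y hy)))))).mul hg.continuousOn
  have hcontF' : ∀ t ∈ Metric.ball t₀ r,
      ContinuousOn (fun y => -(cj/α) * (u y + t * g y) ^ (-(1+1/α)) * g y ^ 2) (Icc 0 1) := by
    intro t ht
    exact (continuousOn_const.mul (((hinnerC t).continuousOn).rpow_const
      (fun y hy => Or.inl (ne_of_gt (lt_of_lt_of_le hε (hpos t ht y hy)))))).mul
      (hg.continuousOn.pow 2)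
  refine (intervalIntegral.hasDerivAt_integral_of_dominated_loc_of_deriv_le
    (F := fun t y => cj * (u y + t * g y) ^ (-1/α) * g y)
    (F' := fun t y => -(cj/α) * (u y + t * g y) ^ (-(1+1/α)) * g y ^ 2)
    (bound := fun _ => (cj/α) * ε ^ (-(1+1/α)) * B ^ 2) (μ := volume) (a := (0:ℝ)) (b := 1) (Metric.ball_mem_nhds t₀ hr)
    ?_ ?_ ?_ ?_ ?_ ?_).2
  · filter_upwards [Metric.ball_mem_nhds t₀ hr] with t ht
    exact ((hcontF t ht).mono (by rw [hIoc]; exact Ioc_subset_Icc_self)).aestronglyMeasurable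
      measurableSet_uIoc
  · exact ContinuousOn.intervalIntegrable (by rw [uIcc_of_le zero_le_one]; exact hcontF t₀ ht₀)
  · exact ((hcontF' t₀ ht₀).mono (by rw [hIoc]; exact Ioc_subset_Icc_self)).aestronglyMeasurable
      measurableSet_uIoc
  · filter_upwards with y hy x hx
    have hyI : y ∈ Icc (0:ℝ) 1 := Ioc_subset_Icc_self (hIoc ▸ hy)
    have hz : ε ≤ u y + x * g y := hpos x hx y hyI
    have hz0 : (0:ℝ) < u y + x * g y := lt_of_lt_of_le hε hz
    rw [Real.norm_eq_abs, abs_mul, abs_mul, abs_neg, abs_of_pos (div_pos hcj hα0),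
      abs_of_nonneg (Real.rpow_nonneg (le_of_lt hz0) _), abs_pow]
    have h1 := Real.rpow_le_rpow_of_nonpos hε hz hexp
    have h2 : |g y| ^ 2 ≤ B ^ 2 := pow_le_pow_left₀ (abs_nonneg _) (hB y hyI) 2
    exact mul_le_mul (mul_le_mul_of_nonneg_left h1 (div_pos hcj hα0).le) h2 (by positivity)
      (by positivity)
  · exact intervalIntegrable_const
  · filter_upwards with y hy x hx
    have hyI : y ∈ Icc (0:ℝ) 1 := Ioc_subset_Icc_self (hIoc ▸ hy)
    have hz0 : (0:ℝ) < u y + x * g y := lt_of_lt_of_le hε (hpos x hx y hyI)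
    have hinner : HasDerivAt (fun s : ℝ => u y + s * g y) (g y) x :=
      (hasDerivAt_mul_const (g y)).const_add (u y)
    have h := ((phi2_deriv (cj := cj) hα0 hz0).comp x hinner).mul_const (g y)
    refine h.congr_deriv ?_
    ring



private lemma f_cont {n : ℕ} {V : ℝ → ℝ} (hV : Continuous V)
    {f : ((Fin (n + 1) → ℝ) × (Fin n → ℝ)) → ℝ → ℝ}
    (hf : ∀ ab x, f ab x =
      (∑ k : Fin (n + 1), ab.1 k * Real.cos (2 * π * k.1 * x)) +
      (∑ k : Fin n, ab.2 k * Real.sin (2 * π * (k.1 + 1) * x)) - V x)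
    (ab : (Fin (n + 1) → ℝ) × (Fin n → ℝ)) : Continuous (f ab) := by
  have : f ab = fun x => (∑ k : Fin (n+1), ab.1 k * Real.cos (2*π*k.1*x)) +
      (∑ k : Fin n, ab.2 k * Real.sin (2*π*(k.1+1)*x)) - V x := funext (hf ab)
  rw [this]
  exact ((continuous_finset_sum _ fun k _ => continuous_const.mul
      (Real.continuous_cos.comp (continuous_const.mul continuous_id))).add
    (continuous_finset_sum _ fun k _ => continuous_const.mul
      (Real.continuous_sin.comp (continuous_const.mul continuous_id)))).sub hV

private lemma f_per {n : ℕ} {V : ℝ → ℝ} (hVper : Function.Periodic V 1)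
    {f : ((Fin (n + 1) → ℝ) × (Fin n → ℝ)) → ℝ → ℝ}
    (hf : ∀ ab x, f ab x =
      (∑ k : Fin (n + 1), ab.1 k * Real.cos (2 * π * k.1 * x)) +
      (∑ k : Fin n, ab.2 k * Real.sin (2 * π * (k.1 + 1) * x)) - V x)
    (ab : (Fin (n + 1) → ℝ) × (Fin n → ℝ)) : Function.Periodic (f ab) 1 := by
  intro x
  rw [hf, hf, hVper x]
  congr 2
  · refine Finset.sum_congr rfl fun k _ => ?_
    rw [show 2*π*(k.1:ℝ)*(x+1) = 2*π*(k.1:ℝ)*x + (k.1:ℤ)*(2*π) by push_cast; ring,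
      Real.cos_add_int_mul_two_pi]
  · refine Finset.sum_congr rfl fun k _ => ?_
    rw [show 2*π*((k.1:ℝ)+1)*(x+1) = 2*π*((k.1:ℝ)+1)*x + (((k.1+1 : ℕ):ℤ):ℝ)*(2*π) by push_cast; ring,
      Real.sin_add_int_mul_two_pi]

private lemma fL {n : ℕ} {V : ℝ → ℝ}
    {f : ((Fin (n + 1) → ℝ) × (Fin n → ℝ)) → ℝ → ℝ}
    (hf : ∀ ab x, f ab x =
      (∑ k : Fin (n + 1), ab.1 k * Real.cos (2 * π * k.1 * x)) +
      (∑ k : Fin n, ab.2 k * Real.sin (2 * π * (k.1 + 1) * x)) - V x)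
    (s t : ℝ) (p q : (Fin (n + 1) → ℝ) × (Fin n → ℝ)) (x : ℝ) :
    f (s • p + t • q) x = s * f p x + t * f q x + (s + t - 1) * V x := by
  simp only [hf, Prod.fst_add, Prod.snd_add, Prod.smul_fst, Prod.smul_snd, Pi.add_apply,
    Pi.smul_apply, smul_eq_mul, add_mul, mul_assoc, Finset.sum_add_distrib, ← Finset.mul_sum]
  ring

private lemma exists_pos_lb {h : ℝ → ℝ} (hh : Continuous h) (hper : Function.Periodic h 1)
    (hpos : ∀ x, 0 < h x) : ∃ ε : ℝ, 0 < ε ∧ ∀ x, ε ≤ h x := by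
  obtain ⟨y₀, hy₀, hmin⟩ := isCompact_Icc.exists_isMinOn (Set.nonempty_Icc.mpr zero_le_one)
    hh.continuousOn
  refine ⟨h y₀, hpos y₀, fun x => ?_⟩
  have h1 : h (Int.fract x) = h x := by
    have := hper.sub_int_mul_eq (x := x) (n := ⌊x⌋)
    simp only [mul_one] at this
    rw [show Int.fract x = x - ↑⌊x⌋ from rfl, this]
  rw [← h1]
  exact hmin ⟨Int.fract_nonneg x, le_of_lt (Int.fract_lt_one x)⟩

private lemma exists_ub_abs {h : ℝ → ℝ} (hh : Continuous h) (hper : Function.Periodic h 1) :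
    ∃ B : ℝ, 0 ≤ B ∧ ∀ x, |h x| ≤ B := by
  obtain ⟨y₁, hy₁, hmax⟩ := isCompact_Icc.exists_isMaxOn (Set.nonempty_Icc.mpr zero_le_one)
    hh.abs.continuousOn
  refine ⟨|h y₁|, abs_nonneg _, fun x => ?_⟩
  have h1 : |h (Int.fract x)| = |h x| := by
    have := hper.sub_int_mul_eq (x := x) (n := ⌊x⌋)
    simp only [mul_one] at this
    rw [show Int.fract x = x - ↑⌊x⌋ from rfl, this]
  rw [← h1]
  exact hmax ⟨Int.fract_nonneg x, le_of_lt (Int.fract_lt_one x)⟩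

private lemma core {α cj : ℝ} (hα0 : 0 < α) (hcj : 0 < cj) {φ : ℝ → ℝ}
    (hφ : ∀ x : ℝ, 0 < x →
      φ x = if α = 1 then cj * Real.log x else cj * α / (α - 1) * x ^ ((α - 1) / α))
    {P : Type*} {C : Set P} {Φ : P → ℝ} {w : ℝ → P}
    (u g : ℝ → ℝ) (hu : Continuous u) (hgc : Continuous g)
    {ε B : ℝ} (hε0 : 0 < ε) (hle : ∀ x, ε ≤ u x) (hB0 : 0 ≤ B) (hB : ∀ x, |g x| ≤ B)
    (hmem : ∀ t : ℝ, (∀ x, 0 < u x + t * g x) → w t ∈ C)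
    (hΦw : ∀ t : ℝ, w t ∈ C → Φ (w t) = ∫ y in (0:ℝ)..1, φ (u y + t * g y)) :
    HasDerivAt (fun t : ℝ => Φ (w t))
      (∫ y in (0:ℝ)..1, cj * (u y) ^ (-1/α) * g y) 0 ∧
    deriv (deriv fun t : ℝ => Φ (w t)) 0
      = ∫ y in (0:ℝ)..1, -(cj/α) * (u y) ^ (-(1+1/α)) * g y ^ 2 := by
  set r : ℝ := ε / (2 * (B + 1)) with hrdef
  have hr0 : 0 < r := by positivity
  have hrB : r * (B + 1) = ε / 2 := by rw [hrdef]; field_simp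
  have hpos : ∀ t ∈ Metric.ball (0:ℝ) r, ∀ x : ℝ, ε/2 ≤ u x + t * g x := by
    intro t ht x
    have habs : |t| < r := by simpa [Real.dist_eq] using ht
    have h1 : |t * g x| ≤ r * B := by
      rw [abs_mul]
      exact mul_le_mul (le_of_lt habs) (hB x) (abs_nonneg _) (le_of_lt hr0)
    have h2 : r * B ≤ ε / 2 := by nlinarith
    have h3 := neg_abs_le (t * g x)
    have h4 := hle x
    linarith
  have hCmem : ∀ t ∈ Metric.ball (0:ℝ) r, w t ∈ C := by
    intro t ht
    refine hmem t fun x => ?_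
    have := hpos t ht x
    linarith
  have hposIcc : ∀ t ∈ Metric.ball (0:ℝ) r, ∀ y ∈ Icc (0:ℝ) 1, ε/2 ≤ u y + t * g y :=
    fun t ht y _ => hpos t ht y
  have hBIcc : ∀ y ∈ Icc (0:ℝ) 1, |g y| ≤ B := fun y _ => hB y
  have hφd : ∀ x : ℝ, 0 < x → HasDerivAt φ (cj * x ^ (-1/α)) x := fun x hx => phi_deriv hα0 hφ hx
  set F : ℝ → ℝ := fun t => ∫ y in (0:ℝ)..1, φ (u y + t * g y) with hF
  set F1 : ℝ → ℝ := fun t => ∫ y in (0:ℝ)..1, cj * (u y + t * g y) ^ (-1/α) * g y with hF1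
  have hEv : (fun t : ℝ => Φ (w t)) =ᶠ[nhds 0] F := by
    filter_upwards [Metric.ball_mem_nhds (0:ℝ) hr0] with t ht
    exact hΦw t (hCmem t ht)
  have hdF : ∀ t ∈ Metric.ball (0:ℝ) r, HasDerivAt F (F1 t) t := by
    intro t ht
    have habs : |t| < r := by simpa [Real.dist_eq] using ht
    have hr' : 0 < r - |t| := by linarith
    refine DF hu hgc hα0 hcj hφd hr' (half_pos hε0) ?_ hBIcc
    intro s hs y hy
    refine hposIcc s ?_ y hy
    have h1 : |s - t| < r - |t| := by simpa [Real.dist_eq] using hs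
    have h2 : |s| ≤ |s - t| + |t| := by
      calc |s| = |(s - t) + t| := by ring_nf
      _ ≤ |s - t| + |t| := abs_add_le _ _
    simp only [Metric.mem_ball, Real.dist_eq, sub_zero]
    linarith
  have hdF1 : HasDerivAt F1
      (∫ y in (0:ℝ)..1, -(cj/α) * (u y + 0 * g y) ^ (-(1+1/α)) * g y ^ 2) 0 :=
    DF1 hu hgc hα0 hcj hr0 (half_pos hε0) hposIcc hBIcc
  constructor
  · have h0 : HasDerivAt F (F1 0) 0 := hdF 0 (Metric.mem_ball_self hr0)
    have h1 : HasDerivAt (fun t : ℝ => Φ (w t)) (F1 0) 0 := h0.congr_of_eventuallyEq hEv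
    have h2 : F1 0 = ∫ y in (0:ℝ)..1, cj * (u y) ^ (-1/α) * g y := by
      rw [hF1]
      exact intervalIntegral.integral_congr fun y _ => by norm_num
    rw [← h2]
    exact h1
  · have hDed : deriv (fun t : ℝ => Φ (w t)) =ᶠ[nhds 0] deriv F := hEv.deriv
    have hDF' : deriv F =ᶠ[nhds 0] F1 := by
      filter_upwards [Metric.ball_mem_nhds (0:ℝ) hr0] with t ht
      exact (hdF t ht).deriv
    have h3 : deriv (deriv fun t : ℝ => Φ (w t)) 0 = deriv F1 0 := (hDed.trans hDF').deriv_eq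
    rw [h3, hdF1.deriv]
    exact intervalIntegral.integral_congr fun y _ => by norm_num



private lemma neg_int {α cj : ℝ} (hα0 : 0 < α) (hcj : 0 < cj)
    {u : ℝ → ℝ} (hu : Continuous u) (hupos : ∀ x, 0 < u x)
    {g : ℝ → ℝ} (hg : Continuous g) (hgne : ∃ y ∈ Icc (0:ℝ) 1, g y ≠ 0) :
    (∫ y in (0:ℝ)..1, -(cj/α) * (u y) ^ (-(1+1/α)) * g y ^ 2)
      = -(cj/α) * ∫ y in (0:ℝ)..1, g y ^ 2 / u y ^ (1+1/α) ∧
    (∫ y in (0:ℝ)..1, -(cj/α) * (u y) ^ (-(1+1/α)) * g y ^ 2) < 0 := by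
  have heq : (∫ y in (0:ℝ)..1, -(cj/α) * (u y) ^ (-(1+1/α)) * g y ^ 2)
      = -(cj/α) * ∫ y in (0:ℝ)..1, g y ^ 2 / u y ^ (1+1/α) := by
    rw [← intervalIntegral.integral_const_mul]
    refine intervalIntegral.integral_congr fun y _ => ?_
    rw [Real.rpow_neg (hupos y).le]
    ring
  refine ⟨heq, ?_⟩
  rw [heq]
  have hI : 0 < ∫ y in (0:ℝ)..1, g y ^ 2 / u y ^ (1+1/α) := by
    refine intervalIntegral.integral_pos zero_lt_one ?_ ?_ ?_
    · exact ((hg.pow 2).continuousOn).div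
        ((hu.continuousOn).rpow_const fun y _ => Or.inl (ne_of_gt (hupos y)))
        (fun y _ => ne_of_gt (Real.rpow_pos_of_pos (hupos y) _))
    · intro y _
      exact div_nonneg (sq_nonneg _) (Real.rpow_nonneg (hupos y).le _)
    · obtain ⟨y, hy, hne⟩ := hgne
      exact ⟨y, hy, div_pos (pow_two_pos_of_ne_zero hne) (Real.rpow_pos_of_pos (hupos y) _)⟩
  exact mul_neg_of_neg_of_pos (neg_lt_zero.mpr (div_pos hcj hα0)) hI

theorem stmt_6 (n : ℕ) (V : ℝ → ℝ) (hV : Continuous V) (hVper : Function.Periodic V 1)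
    (α cj : ℝ) (hα0 : 0 < α) (hα2 : α ≤ 2) (hcj : 0 < cj)
    (φ : ℝ → ℝ)
    (hφ : ∀ x : ℝ, 0 < x →
      φ x = if α = 1 then cj * Real.log x else cj * α / (α - 1) * x ^ ((α - 1) / α))
    (f : ((Fin (n + 1) → ℝ) × (Fin n → ℝ)) → ℝ → ℝ)
    (hf : ∀ ab x, f ab x =
      (∑ k : Fin (n + 1), ab.1 k * Real.cos (2 * π * k.1 * x)) +
      (∑ k : Fin n, ab.2 k * Real.sin (2 * π * (k.1 + 1) * x)) - V x)
    (C : Set ((Fin (n + 1) → ℝ) × (Fin n → ℝ)))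
    (hC : C = {ab | ∀ x : ℝ, 0 < f ab x})
    (Φ : ((Fin (n + 1) → ℝ) × (Fin n → ℝ)) → ℝ)
    (hΦ : ∀ ab ∈ C, Φ ab = ∫ y in (0:ℝ)..1, φ (f ab y)) :
    (∀ ab ∈ C, ∀ v : (Fin (n + 1) → ℝ) × (Fin n → ℝ), v ≠ 0 →
      deriv (deriv fun t : ℝ => Φ (ab + t • v)) 0 =
        -(cj / α) * ∫ y in (0:ℝ)..1,
          ((∑ k : Fin (n + 1), v.1 k * Real.cos (2 * π * k.1 * y)) +
            (∑ k : Fin n, v.2 k * Real.sin (2 * π * (k.1 + 1) * y))) ^ 2 /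
            f ab y ^ (1 + 1 / α) ∧
      deriv (deriv fun t : ℝ => Φ (ab + t • v)) 0 < 0) ∧
    StrictConcaveOn ℝ C Φ := by
  have hupos : ∀ ab ∈ C, ∀ x, 0 < f ab x := fun ab hab => by rw [hC] at hab; exact hab
  have key : ∀ ab, ab ∈ C → ∀ v : (Fin (n+1) → ℝ) × (Fin n → ℝ),
      HasDerivAt (fun t : ℝ => Φ (ab + t • v))
        (∫ y in (0:ℝ)..1, cj * (f ab y) ^ (-1/α) * (f v y + V y)) 0 ∧
      deriv (deriv fun t : ℝ => Φ (ab + t • v)) 0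
        = ∫ y in (0:ℝ)..1, -(cj/α) * (f ab y) ^ (-(1+1/α)) * (f v y + V y) ^ 2 := by
    intro ab hab v
    obtain ⟨ε, hε0, hle⟩ := exists_pos_lb (f_cont hV hf ab) (f_per hVper hf ab) (hupos ab hab)
    obtain ⟨B, hB0, hB⟩ := exists_ub_abs ((f_cont hV hf v).add hV) ((f_per hVper hf v).add hVper)
    have hflin : ∀ (t x : ℝ), f (ab + t • v) x = f ab x + t * (f v x + V x) := by
      intro t x
      have h := fL hf 1 t ab v x
      simp only [one_smul, one_mul] at h
      rw [h]; ring
    exact core hα0 hcj hφ (C := C) (Φ := Φ) (w := fun t : ℝ => ab + t • v)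
      (f ab) (fun y => f v y + V y)
      (f_cont hV hf ab) ((f_cont hV hf v).add hV) hε0 hle hB0 hB
      (fun t hpos => by
        show ab + t • v ∈ C
        rw [hC]
        intro x
        rw [hflin t x]
        exact hpos x)
      (fun t htC => by
        show Φ (ab + t • v) = _
        rw [hΦ _ htC]
        exact intervalIntegral.integral_congr fun y _ => by rw [hflin t y])
  have htrig : ∀ (v : (Fin (n+1) → ℝ) × (Fin n → ℝ)) (y : ℝ), f v y + V y =
      (∑ k : Fin (n+1), v.1 k * Real.cos (2*π*k.1*y)) +
      (∑ k : Fin n, v.2 k * Real.sin (2*π*(k.1+1)*y)) := fun v y => by rw [hf]; ring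
  have hgex : ∀ v : (Fin (n+1) → ℝ) × (Fin n → ℝ), v ≠ 0 →
      ∃ y ∈ Icc (0:ℝ) 1, f v y + V y ≠ 0 := by
    intro v hv
    by_contra hcon
    push_neg at hcon
    exact hv (coeffs_zero v (fun y hy => by rw [← htrig v y]; exact hcon y hy))
  have hess : ∀ ab, ab ∈ C → ∀ v, v ≠ 0 →
      deriv (deriv fun t : ℝ => Φ (ab + t • v)) 0 =
        -(cj / α) * (∫ y in (0:ℝ)..1,
          ((∑ k : Fin (n + 1), v.1 k * Real.cos (2 * π * k.1 * y)) +
            (∑ k : Fin n, v.2 k * Real.sin (2 * π * (k.1 + 1) * y))) ^ 2 /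
            f ab y ^ (1 + 1 / α)) ∧
      deriv (deriv fun t : ℝ => Φ (ab + t • v)) 0 < 0 := by
    intro ab hab v hv
    have h2 := (key ab hab v).2
    obtain ⟨heq, hneg⟩ := neg_int hα0 hcj (f_cont hV hf ab) (hupos ab hab)
      ((f_cont hV hf v).add hV) (hgex v hv)
    constructor
    · simp only [Pi.add_apply] at heq; rw [h2, heq]
      congr 1
      exact intervalIntegral.integral_congr fun y _ => by rw [htrig v y]
    · rw [h2]; exact hneg
  refine ⟨fun ab hab v hv => hess ab hab v hv, ?_⟩
  have hconv : Convex ℝ C := by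
    intro p hp q hq a b ha hb hab2
    rw [hC]
    intro x
    have h := fL hf a b p q x
    rw [h, hab2]
    simp only [sub_self, zero_mul, add_zero]
    have hpx := hupos p hp x
    have hqx := hupos q hq x
    rcases eq_or_lt_of_le ha with h0 | h0
    · have hb1 : b = 1 := by linarith
      rw [← h0, hb1]; simpa using hqx
    · have h1 : 0 ≤ b * f q x := mul_nonneg hb (le_of_lt hqx)
      have h2 : 0 < a * f p x := mul_pos h0 hpx
      linarith
  refine ⟨hconv, ?_⟩
  intro p hp q hq hpq a b ha hb hab2
  set v : (Fin (n+1) → ℝ) × (Fin n → ℝ) := q - p with hv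
  have hvne : v ≠ 0 := sub_ne_zero.mpr (Ne.symm hpq)
  have hmem : ∀ s ∈ Icc (0:ℝ) 1, p + s • v ∈ C := by
    intro s hs
    have he : p + s • v = (1-s) • p + s • q := by module
    rw [he]
    exact hconv hp hq (by linarith [hs.2]) hs.1 (by ring)
  have hψcont : ContinuousOn (fun z : ℝ => Φ (p + z • v)) (Icc 0 1) := by
    intro s hs
    have hd := (key _ (hmem s hs) v).1
    have h0 : HasDerivAt (fun t : ℝ => Φ ((p + s • v) + t • v))
        (∫ y in (0:ℝ)..1, cj * (f (p + s • v) y) ^ (-1/α) * (f v y + V y)) (s - s) := by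
      rw [sub_self]; exact hd
    have h1 := (HasDerivAt.comp_sub_const s s h0).continuousAt
    have hshift : (fun z : ℝ => Φ (p + z • v))
        = fun z : ℝ => (fun t : ℝ => Φ ((p + s • v) + t • v)) (z - s) := by
      funext z
      simp only
      congr 1
      module
    rw [hshift]
    exact h1.continuousWithinAt
  have hψd2 : ∀ s ∈ interior (Icc (0:ℝ) 1), deriv^[2] (fun z : ℝ => Φ (p + z • v)) s < 0 := by
    intro s hs
    rw [interior_Icc] at hs
    have hsIcc : s ∈ Icc (0:ℝ) 1 := ⟨le_of_lt hs.1, le_of_lt hs.2⟩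
    have hmem' := hmem s hsIcc
    have hshift : (fun z : ℝ => Φ (p + z • v))
        = fun z : ℝ => (fun t : ℝ => Φ ((p + s • v) + t • v)) (z - s) := by
      funext z
      simp only
      congr 1
      module
    have hit : deriv^[2] (fun z : ℝ => Φ (p + z • v))
        = deriv (deriv (fun z : ℝ => Φ (p + z • v))) := by
      rw [show (2:ℕ) = 1+1 from rfl, Function.iterate_succ_apply', Function.iterate_one]
    have hd1 : deriv (fun z : ℝ => Φ (p + z • v))
        = fun z : ℝ => deriv (fun t : ℝ => Φ ((p + s • v) + t • v)) (z - s) := by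
      funext z
      rw [hshift]
      exact deriv_comp_sub_const (fun t : ℝ => Φ (p + s • v + t • v)) s z
    have hcalc : deriv^[2] (fun z : ℝ => Φ (p + z • v)) s
        = deriv (deriv fun t : ℝ => Φ ((p + s • v) + t • v)) 0 := by
      rw [hit, hd1]
      rw [deriv_comp_sub_const, sub_self]
    rw [hcalc]
    exact (hess _ hmem' v hvne).2
  have hSC : StrictConcaveOn ℝ (Icc (0:ℝ) 1) (fun z : ℝ => Φ (p + z • v)) :=
    strictConcaveOn_of_deriv2_neg (convex_Icc 0 1) hψcont hψd2
  have h01 : (0:ℝ) ∈ Icc (0:ℝ) 1 := ⟨le_refl _, zero_le_one⟩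
  have h11 : (1:ℝ) ∈ Icc (0:ℝ) 1 := ⟨zero_le_one, le_refl _⟩
  have hlt := hSC.2 h01 h11 (by norm_num) ha hb hab2
  simp only [smul_eq_mul, mul_zero, mul_one, zero_add] at hlt
  have hψ0 : Φ (p + (0:ℝ) • v) = Φ p := by congr 1; module
  have hψ1 : Φ (p + (1:ℝ) • v) = Φ q := by congr 1; rw [hv]; module
  have hend : Φ (p + b • v) = Φ (a • p + b • q) := by
    congr 1
    have hab' : a = 1 - b := by linarith
    rw [hab', hv]
    module
  rw [hψ0, hψ1, hend] at hlt
  simpa [smul_eq_mul] using hlt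

end helpers
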